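/- Let I ⊆ ℕ be a recursively enumerable set and let R : ℕ → ℕ → ℕ → Prop be such that for every i, R i is an equivalence relation on ℕ, and the predicate fun t : ℕ × ℕ × ℕ => R t.1 t.2.1 t.2.2 is r.e. (REPred). Then the join ⨆ i ∈ I, (the equivalence relation R i) in the lattice Setoid ℕ is a recursively enumerable equivalence relation: the predicate fun p : ℕ × ℕ => (⨆ i ∈ I, R i) relates p.1 p.2 is r.e. -/

import Mathlib

/-- A predicate is recursively enumerable (r.e.); `RePred` is Mathlib's name for it. -/
abbrev REPred' {α : Type} [Primcodable α] (p : α → Prop) : Prop := REPred p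

open Nat.Partrec (Code)
open Nat.Partrec.Code

/-- An r.e. predicate has a primitive recursive "witness" function. -/
lemma rePred_exists_prim {α : Type} [Primcodable α] {p : α → Prop} (hp : REPred p) :
    ∃ f : α → ℕ → Bool, Primrec₂ f ∧ ∀ a, p a ↔ ∃ k, f a k = true := by
  obtain ⟨c, hc⟩ := Code.exists_code.1 hp
  refine ⟨fun a k => (evaln k c (Encodable.encode a)).isSome, ?_, ?_⟩
  · have h1 : Primrec fun q : α × ℕ => ((q.2, c), Encodable.encode q.1) :=
      (Primrec.snd.pair (Primrec.const c)).pair (Primrec.encode.comp Primrec.fst)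
    exact Primrec.option_isSome.comp (primrec_evaln.comp h1)
  · intro a
    have hdom : p a ↔ (eval c (Encodable.encode a)).Dom := by
      rw [hc]
      simp only [Encodable.encodek, Part.coe_some, Part.bind_some, Part.map_Dom]
      exact ⟨fun h => ⟨h, trivial⟩, fun h => h.fst⟩
    rw [hdom, Part.dom_iff_mem]
    constructor
    · rintro ⟨x, hx⟩
      obtain ⟨k, hk⟩ := evaln_complete.1 hx
      exact ⟨k, by rw [Option.isSome_iff_exists]; exact ⟨x, hk⟩⟩
    · rintro ⟨k, hk⟩
      obtain ⟨x, hx⟩ := Option.isSome_iff_exists.1 hk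
      exact ⟨x, evaln_complete.2 ⟨k, hx⟩⟩

/-- Conversely, a predicate with a computable witness function is r.e. -/
lemma rePred_of_exists_prim {α : Type} [Primcodable α] {f : α → ℕ → Bool} (hf : Primrec₂ f) :
    REPred fun a => ∃ k, f a k = true := by
  have hc : Computable₂ fun (a : α) (n : ℕ) => (bif f a n then some 0 else none : Option ℕ) :=
    Computable.cond hf.to_comp (Computable.const _) (Computable.const _)
  have hpr : Partrec fun a => Nat.rfindOpt fun n => (bif f a n then some 0 else none : Option ℕ) :=
    Partrec.rfindOpt hc
  refine hpr.dom_re.of_eq fun a => ?_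
  rw [Nat.rfindOpt_dom]
  constructor
  · rintro ⟨n, x, hx⟩
    refine ⟨n, ?_⟩
    cases h : f a n <;> simp [h] at hx ⊢
  · rintro ⟨n, hn⟩
    exact ⟨n, 0, by simp [hn]⟩

/-- Boolean chain check. -/
def chainB (g : ℕ → ℕ → Bool) : ℕ → List ℕ → Bool
  | _, [] => true
  | x, a :: l => g x a && chainB g a l

lemma chainB_iff (g : ℕ → ℕ → Bool) : ∀ (l : List ℕ) (x : ℕ),
    chainB g x l = true ↔ List.Chain (fun a b => g a b = true) x l := by
  intro l
  induction l with
  | nil => intro x; simp [chainB, List.Chain]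
  | cons a l ih => intro x; simp [chainB, List.chain_cons, ih a, List.Chain]

lemma foldl_fst (g : ℕ → ℕ → Bool) : ∀ (l : List ℕ) (x : ℕ) (s : Bool),
    (l.foldl (fun st b => (st.1 && g st.2 b, b)) (s, x)).1 = (s && chainB g x l) := by
  intro l
  induction l with
  | nil => intro x s; simp [chainB]
  | cons a l ih => intro x s; simp [chainB, ih a, Bool.and_assoc]

lemma foldl_snd (g : ℕ → ℕ → Bool) : ∀ (l : List ℕ) (x : ℕ) (s : Bool),
    (l.foldl (fun st b => (st.1 && g st.2 b, b)) (s, x)).2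
      = (x :: l).getLast (List.cons_ne_nil _ _) := by
  intro l
  induction l with
  | nil => intro x s; simp
  | cons a l ih => intro x s; simp [ih a, List.getLast_cons_cons]

/-- Bounded existential witness. -/
def gB (f : ℕ × ℕ → ℕ → Bool) (p : ℕ × ℕ) (k : ℕ) : Bool :=
  (List.range k).foldl (fun s m => s || f p m) false

lemma gB_iff (f : ℕ × ℕ → ℕ → Bool) (p : ℕ × ℕ) (k : ℕ) :
    gB f p k = true ↔ ∃ m < k, f p m = true := by
  have h : ∀ (l : List ℕ) (s : Bool), l.foldl (fun s m => s || f p m) s = (s || l.any (f p)) := by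
    intro l
    induction l with
    | nil => intro s; simp
    | cons a l ih => intro s; simp [ih, Bool.or_assoc]
  rw [gB, h]
  simp [List.any_eq_true, List.mem_range]

lemma gB_mono {f : ℕ × ℕ → ℕ → Bool} {p : ℕ × ℕ} {k k' : ℕ} (h : k ≤ k')
    (hk : gB f p k = true) : gB f p k' = true := by
  rw [gB_iff] at hk ⊢
  obtain ⟨m, hm, hf⟩ := hk
  exact ⟨m, lt_of_lt_of_le hm h, hf⟩

lemma gB_prim {f : ℕ × ℕ → ℕ → Bool} (hf : Primrec₂ f) : Primrec₂ (gB f) := by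
  have : Primrec fun a : (ℕ × ℕ) × ℕ => (List.range a.2).foldl (fun s m => s || f a.1 m) false :=
    Primrec.list_foldl (Primrec.list_range.comp Primrec.snd) (Primrec.const false)
      (Primrec.or.comp (Primrec.fst.comp Primrec.snd)
        (hf.comp (Primrec.fst.comp Primrec.fst) (Primrec.snd.comp Primrec.snd))).to₂
  exact this

/-- The full checker: `n` codes a pair (chain, time bound). -/
def checker (f : ℕ × ℕ → ℕ → Bool) (q : ℕ × ℕ) (n : ℕ) : Bool :=
  let l : List ℕ := (Encodable.decode n.unpair.1 : Option (List ℕ)).getD []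
  let st := l.foldl (fun st b => (st.1 && gB f (st.2, b) n.unpair.2, b)) (true, q.1)
  st.1 && (st.2 == q.2)

lemma checker_prim {f : ℕ × ℕ → ℕ → Bool} (hf : Primrec₂ f) :
    Primrec₂ (checker f) := by
  have hg : Primrec₂ (gB f) := gB_prim hf
  have hl : Primrec fun a : (ℕ × ℕ) × ℕ =>
      ((Encodable.decode a.2.unpair.1 : Option (List ℕ)).getD []) :=
    Primrec.option_getD.comp
      (Primrec.decode.comp (Primrec.fst.comp (Primrec.unpair.comp Primrec.snd)))
      (Primrec.const [])
  have hfold : Primrec fun a : (ℕ × ℕ) × ℕ =>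
      (((Encodable.decode a.2.unpair.1 : Option (List ℕ)).getD []).foldl
        (fun st b => (st.1 && gB f (st.2, b) a.2.unpair.2, b)) (true, a.1.1)) :=
    Primrec.list_foldl hl
      ((Primrec.const true).pair (Primrec.fst.comp Primrec.fst))
      ((Primrec.and.comp (Primrec.fst.comp (Primrec.fst.comp Primrec.snd))
          (hg.comp
            ((Primrec.snd.comp (Primrec.fst.comp Primrec.snd)).pair (Primrec.snd.comp Primrec.snd))
            (Primrec.snd.comp (Primrec.unpair.comp (Primrec.snd.comp Primrec.fst))))).pair
        (Primrec.snd.comp Primrec.snd)).to₂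
  exact (Primrec.and.comp (Primrec.fst.comp hfold)
    (Primrec.beq.comp (Primrec.snd.comp hfold) (Primrec.snd.comp Primrec.fst))).to₂

/-- The reflexive transitive closure of an r.e. relation on ℕ is r.e. -/
lemma re_reflTransGen {S : ℕ → ℕ → Prop} (hS : REPred fun p : ℕ × ℕ => S p.1 p.2) :
    REPred fun p : ℕ × ℕ => Relation.ReflTransGen S p.1 p.2 := by
  obtain ⟨f, hf, hfspec⟩ := rePred_exists_prim hS
  refine (rePred_of_exists_prim (checker_prim hf)).of_eq fun q => ?_
  constructor
  · rintro ⟨n, hn⟩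
    unfold checker at hn
    set l : List ℕ := (Encodable.decode n.unpair.1 : Option (List ℕ)).getD [] with hldef
    set k := n.unpair.2 with hkdef
    rw [Bool.and_eq_true] at hn
    obtain ⟨h1, h2⟩ := hn
    rw [foldl_fst (fun a b => gB f (a, b) k) l q.1 true, Bool.true_and, chainB_iff] at h1
    rw [foldl_snd (fun a b => gB f (a, b) k) l q.1 true, beq_iff_eq] at h2
    have hchain : List.Chain S q.1 l := by
      refine List.Chain.imp ?_ h1
      intro a b hab
      obtain ⟨m, _, hm⟩ := (gB_iff f (a, b) k).1 hab
      exact (hfspec (a, b)).2 ⟨m, hm⟩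
    exact List.relationReflTransGen_of_exists_isChain_cons l hchain h2
  · intro h
    obtain ⟨l, hl1, hl2⟩ := List.exists_isChain_cons_of_relationReflTransGen h
    -- find a uniform bound k
    have hbnd : ∀ (l : List ℕ) (x : ℕ), List.Chain S x l →
        ∃ k, List.Chain (fun a b => gB f (a, b) k = true) x l := by
      intro l
      induction l with
      | nil => exact fun x _ => ⟨0, List.Chain.nil⟩
      | cons a l ih =>
        intro x hx
        unfold List.Chain at hx
        rw [List.isChain_cons_cons] at hx
        obtain ⟨k₁, hk₁⟩ := ih a hx.2
        obtain ⟨m, hm⟩ := (hfspec (x, a)).1 hx.1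
        refine ⟨max (m + 1) k₁, List.isChain_cons_cons.2 ⟨?_, ?_⟩⟩
        · exact gB_mono (le_max_left _ _) ((gB_iff f (x, a) (m + 1)).2 ⟨m, Nat.lt_succ_self m, hm⟩)
        · exact List.Chain.imp (fun a b hab => gB_mono (le_max_right _ _) hab) hk₁
    obtain ⟨k, hk⟩ := hbnd l q.1 hl1
    refine ⟨Nat.pair (Encodable.encode l) k, ?_⟩
    unfold checker
    simp only [Nat.unpair_pair, Encodable.encodek, Option.getD_some]
    rw [Bool.and_eq_true,
      foldl_fst (fun a b => gB f (a, b) k) l q.1 true,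
      foldl_snd (fun a b => gB f (a, b) k) l q.1 true]
    exact ⟨by rw [Bool.true_and, chainB_iff]; exact hk, by rw [beq_iff_eq]; exact hl2⟩

/-- The join, in the lattice `Setoid ℕ`, of a recursively enumerable set of
(uniformly) recursively enumerable equivalence relations is a recursively
enumerable equivalence relation. -/
theorem re_iSup_of_re_family (I : Set ℕ) (hI : REPred' fun i => i ∈ I)
    (R : ℕ → ℕ → ℕ → Prop) (hR : ∀ i, Equivalence (R i))
    (hRe : REPred' fun t : ℕ × ℕ × ℕ => R t.1 t.2.1 t.2.2) :
    REPred' fun p : ℕ × ℕ =>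
      (⨆ i ∈ I, (⟨R i, hR i⟩ : Setoid ℕ)).r p.1 p.2 := by
  -- the union relation
  set S : ℕ → ℕ → Prop := fun x y => ∃ i, i ∈ I ∧ R i x y with hSdef
  -- S is r.e.
  obtain ⟨fI, hfI, hIspec⟩ := rePred_exists_prim hI
  obtain ⟨fR, hfR, hRspec⟩ := rePred_exists_prim hRe
  have hS : REPred fun p : ℕ × ℕ => S p.1 p.2 := by
    set F : ℕ × ℕ → ℕ → Bool := fun p n =>
      fI n.unpair.1 n.unpair.2.unpair.1 && fR (n.unpair.1, p.1, p.2) n.unpair.2.unpair.2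
      with hFdef
    have hF : Primrec₂ F := by
      have hu1 : Primrec fun a : (ℕ × ℕ) × ℕ => a.2.unpair.1 :=
        Primrec.fst.comp (Primrec.unpair.comp Primrec.snd)
      have hu2 : Primrec fun a : (ℕ × ℕ) × ℕ => a.2.unpair.2.unpair :=
        Primrec.unpair.comp (Primrec.snd.comp (Primrec.unpair.comp Primrec.snd))
      exact (Primrec.and.comp (hfI.comp hu1 (Primrec.fst.comp hu2))
        (hfR.comp (hu1.pair ((Primrec.fst.comp Primrec.fst).pair (Primrec.snd.comp Primrec.fst)))
          (Primrec.snd.comp hu2))).to₂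
    refine (rePred_of_exists_prim hF).of_eq fun p => ?_
    constructor
    · rintro ⟨n, hn⟩
      rw [hFdef, Bool.and_eq_true] at hn
      exact ⟨n.unpair.1, (hIspec _).2 ⟨_, hn.1⟩, (hRspec _).2 ⟨_, hn.2⟩⟩
    · rintro ⟨i, hi, hr⟩
      obtain ⟨k₁, hk₁⟩ := (hIspec i).1 hi
      obtain ⟨k₂, hk₂⟩ := (hRspec (i, p.1, p.2)).1 hr
      refine ⟨Nat.pair i (Nat.pair k₁ k₂), ?_⟩
      rw [hFdef]
      simp only [Nat.unpair_pair]
      rw [Bool.and_eq_true]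
      exact ⟨hk₁, hk₂⟩
  -- the iSup setoid is the reflexive transitive closure of S
  have hSsymm : Symmetric S := by
    rintro x y ⟨i, hi, h⟩
    exact ⟨i, hi, (hR i).symm h⟩
  have hequiv : Equivalence (Relation.ReflTransGen S) :=
    ⟨fun _ => Relation.ReflTransGen.refl,
      fun h => by
        haveI : Std.Symm S := ⟨fun a b hab => hSsymm hab⟩
        exact Std.Symm.symm _ _ h,
      fun h h' => Relation.ReflTransGen.trans h h'⟩
  have hset : (⨆ i ∈ I, (⟨R i, hR i⟩ : Setoid ℕ)) = ⟨Relation.ReflTransGen S, hequiv⟩ := by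
    apply le_antisymm
    · refine iSup₂_le fun i hi => Setoid.le_def.2 fun {x y} h => ?_
      exact Relation.ReflTransGen.single ⟨i, hi, h⟩
    · refine Setoid.le_def.2 fun {x y} h => ?_
      induction h with
      | refl => exact Setoid.refl' _ x
      | @tail b c _ hbc ih =>
        refine Setoid.trans' _ ih ?_
        obtain ⟨i, hi, hr⟩ := hbc
        have hle : (⟨R i, hR i⟩ : Setoid ℕ) ≤ ⨆ i ∈ I, (⟨R i, hR i⟩ : Setoid ℕ) :=
          le_iSup₂ (f := fun i (_ : i ∈ I) => (⟨R i, hR i⟩ : Setoid ℕ)) i hi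
        exact Setoid.le_def.1 hle hr
  refine (re_reflTransGen hS).of_eq fun p => ?_
  rw [hset]; exact Iff.rfl
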